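/- Suppose α, β ∈ R lie in the same orbit under W. Then: (i) for all σ, δ ∈ V⁰ with α+σ, α+δ ∈ R (hence also β+σ, β+δ ∈ R), [t̂_α^σ, t̂_α^δ] = [t̂_β^σ, t̂_β^δ]; (ii) for all σ, δ ∈ V⁰ with α+σ, α+δ, α+σ+δ ∈ R, t̂_{α+σ}^δ t̂_α^{−δ} = t̂_{β+σ}^δ t̂_β^{−δ}; (iii) for all δ₁, …, δ_n ∈ V⁰ with α+δ_r ∈ R for each r and α+(δ₁+⋯+δ_n) ∈ R, t̂_α^{−(δ₁+⋯+δ_n)} ∏_{r=1}^n t̂_α^{δ_r} = t̂_β^{−(δ₁+⋯+δ_n)} ∏_{r=1}^n t̂_β^{δ_r}, the products being taken in increasing order of r. -/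

import Mathlib

/-- The reflection `s_α(u) = u - (u, α^∨) α` associated to a vector `α`, where
`α^∨ = 2α/(α,α)` and `B` is the bilinear form. -/
noncomputable def reflMap {V : Type*} [AddCommGroup V] [Module ℝ V] (B : V →ₗ[ℝ] V →ₗ[ℝ] ℝ)
    (α : V) : V → V :=
  fun u => u - ((2 * B u α) / B α α) • α

section VS
variable {V : Type*} [AddCommGroup V] [Module ℝ V] (B : V →ₗ[ℝ] V →ₗ[ℝ] ℝ)

lemma reflMap_invol (a u : V) : reflMap B a (reflMap B a u) = u := by
  by_cases h : B a a = 0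
  · simp [reflMap, h]
  · simp only [reflMap, map_sub, map_smul, LinearMap.sub_apply, LinearMap.smul_apply,
      smul_eq_mul]
    match_scalars <;> (field_simp; try ring) <;> ring

lemma reflMap_norm (hsym : ∀ u v : V, B u v = B v u) (a b : V) (ha : B a a ≠ 0) :
    B (reflMap B a b) (reflMap B a b) = B b b := by
  simp only [reflMap, map_sub, map_smul, LinearMap.sub_apply, LinearMap.smul_apply,
    smul_eq_mul]
  rw [hsym a b]
  field_simp
  ring

lemma reflMap_braid (hsym : ∀ u v : V, B u v = B v u) (a b u : V)
    (ha : B a a ≠ 0) (hb : B b b ≠ 0) :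
    reflMap B a (reflMap B b (reflMap B a u)) = reflMap B (reflMap B a b) u := by
  conv_rhs => rw [show reflMap B (reflMap B a b) u
    = u - ((2 * B u (reflMap B a b)) / B (reflMap B a b) (reflMap B a b)) • reflMap B a b
      from rfl, reflMap_norm B hsym a b ha]
  simp only [reflMap, map_sub, map_smul, LinearMap.sub_apply, LinearMap.smul_apply,
    smul_eq_mul]
  rw [hsym a b]
  match_scalars <;> (field_simp; try ring) <;> ring

lemma reflMap_shift (hsym : ∀ u v : V, B u v = B v u) (γ y σ : V)
    (hσ : ∀ u : V, B σ u = 0) :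
    reflMap B γ (y + σ) = reflMap B γ y + σ := by
  simp only [reflMap, map_add, LinearMap.add_apply, hσ γ]
  abel

lemma B_shift (hsym : ∀ u v : V, B u v = B v u) (y σ : V) (hσ : ∀ u : V, B σ u = 0) :
    B (y + σ) (y + σ) = B y y := by
  have h1 : B y σ = 0 := by rw [hsym]; exact hσ y
  simp [hσ, h1]

lemma transv_eq (hsym : ∀ u v : V, B u v = B v u) (y σ u : V) (hy : B y y ≠ 0)
    (hσ : ∀ u : V, B σ u = 0) :
    reflMap B (y + σ) (reflMap B y u) = u + ((2 * B u y) / B y y) • σ := by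
  have h1 : ∀ v : V, B v σ = 0 := fun v => by rw [hsym]; exact hσ v
  simp only [reflMap, map_sub, map_add, map_smul, LinearMap.sub_apply, LinearMap.add_apply,
    LinearMap.smul_apply, smul_eq_mul, h1, hσ]
  match_scalars <;> (field_simp; try ring) <;> simp [hy]

lemma reflMap_self (x : V) (hx : B x x ≠ 0) : reflMap B x x = -x := by
  simp only [reflMap]
  rw [mul_div_assoc, div_self hx]
  module

end VS

/-- The defining relations of the presented group `Ŵ`: (I) `ŵ_α² = 1` and
(II) `ŵ_α ŵ_β ŵ_α = ŵ_{s_α(β)}` for `α, β ∈ R`. -/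
def eawRels {V : Type*} [AddCommGroup V] [Module ℝ V] (B : V →ₗ[ℝ] V →ₗ[ℝ] ℝ)
    (R : Set V) : Set (FreeGroup R) :=
  {r | ∃ α : R, r = FreeGroup.of α * FreeGroup.of α} ∪
  {r | ∃ α β γ : R, (γ : V) = reflMap B (α : V) (β : V) ∧
        r = FreeGroup.of α * FreeGroup.of β * FreeGroup.of α * (FreeGroup.of γ)⁻¹}

/-- The group `Ŵ` presented by generators `ŵ_α` (`α ∈ R`) and relations (I), (II). -/
abbrev EAW {V : Type*} [AddCommGroup V] [Module ℝ V] (B : V →ₗ[ℝ] V →ₗ[ℝ] ℝ)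
    (R : Set V) :=
  PresentedGroup (eawRels B R)

/-- The generator `ŵ_α` of `Ŵ`. -/
def wgen {V : Type*} [AddCommGroup V] [Module ℝ V] (B : V →ₗ[ℝ] V →ₗ[ℝ] ℝ)
    (R : Set V) (α : V) (hα : α ∈ R) : EAW B R :=
  PresentedGroup.of (⟨α, hα⟩ : R)

/-- The element `t̂_α^σ = ŵ_{α+σ} ŵ_α` of `Ŵ`. -/
def tgen {V : Type*} [AddCommGroup V] [Module ℝ V] (B : V →ₗ[ℝ] V →ₗ[ℝ] ℝ)
    (R : Set V) (α σ : V) (hα : α ∈ R) (hασ : α + σ ∈ R) : EAW B R :=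
  wgen B R (α + σ) hασ * wgen B R α hα


section GRP
variable {V : Type*} [AddCommGroup V] [Module ℝ V] (B : V →ₗ[ℝ] V →ₗ[ℝ] ℝ) (R : Set V)

/-- The reflection as a permutation of `V`. -/
noncomputable def reflPerm (a : V) : Equiv.Perm V :=
  ⟨reflMap B a, reflMap B a, fun u => reflMap_invol B a u, fun u => reflMap_invol B a u⟩

@[simp] lemma reflPerm_apply (a u : V) : reflPerm B a u = reflMap B a u := rfl

lemma reflPerm_inv (a : V) : (reflPerm B a)⁻¹ = reflPerm B a := by
  ext u; rfl

lemma mem_neg_of_mem (hsym : ∀ u v : V, B u v = B v u)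
    (hnon : ∀ α ∈ R, B α α ≠ 0)
    (hclos : ∀ α ∈ R, ∀ β ∈ R, reflMap B α β ∈ R)
    {y σ : V} (hy : y ∈ R) (hyσ : y + σ ∈ R) (hσ : ∀ u : V, B σ u = 0) :
    y + -σ ∈ R := by
  have h1 : -(y + σ) ∈ R := by
    have := hclos _ hyσ _ hyσ
    rwa [reflMap_self B _ (hnon _ hyσ)] at this
  have h2 := hclos _ hy _ h1
  have h3 : reflMap B y (-(y + σ)) = y + -σ := by
    simp only [reflMap, map_neg, map_add, LinearMap.neg_apply, LinearMap.add_apply, hσ y]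
    rw [show 2 * -(B y y + 0) / B y y = -2 by field_simp [hnon _ hy]; simp]
    module
  rwa [h3] at h2

lemma wgen_eq {x y : V} (hx : x ∈ R) (hy : y ∈ R) (e : x = y) :
    wgen B R x hx = wgen B R y hy := by subst e; rfl

lemma wgen_mul_self {x : V} (hx : x ∈ R) : wgen B R x hx * wgen B R x hx = 1 := by
  apply (QuotientGroup.eq_one_iff _).2
  exact Subgroup.subset_normalClosure (Or.inl ⟨⟨x, hx⟩, rfl⟩)

lemma wgen_inv {x : V} (hx : x ∈ R) : (wgen B R x hx)⁻¹ = wgen B R x hx :=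
  inv_eq_of_mul_eq_one_right (wgen_mul_self B R hx)

lemma wgen_braid (hclos : ∀ α ∈ R, ∀ β ∈ R, reflMap B α β ∈ R)
    {x y : V} (hx : x ∈ R) (hy : y ∈ R) :
    wgen B R x hx * wgen B R y hy * wgen B R x hx
      = wgen B R (reflMap B x y) (hclos _ hx _ hy) := by
  have h1 : wgen B R x hx * wgen B R y hy * wgen B R x hx
      * (wgen B R (reflMap B x y) (hclos _ hx _ hy))⁻¹ = 1 := by
    apply (QuotientGroup.eq_one_iff _).2
    exact Subgroup.subset_normalClosure
      (Or.inr ⟨⟨x, hx⟩, ⟨y, hy⟩, ⟨reflMap B x y, hclos _ hx _ hy⟩, rfl, rfl⟩)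
  exact (mul_inv_eq_one.mp h1)

end GRP

section PI
variable {V : Type*} [AddCommGroup V] [Module ℝ V] (B : V →ₗ[ℝ] V →ₗ[ℝ] ℝ) (R : Set V)
variable (hsym : ∀ u v : V, B u v = B v u) (hnon : ∀ α ∈ R, B α α ≠ 0)

/-- The canonical homomorphism `Ŵ → Perm V`. -/
noncomputable def piW : EAW B R →* Equiv.Perm V :=
  PresentedGroup.toGroup (f := fun x : R => reflPerm B (x : V)) (by
    rintro r (⟨a, rfl⟩ | ⟨a, b, c, hc, rfl⟩)
    · simp only [map_mul, FreeGroup.lift_apply_of]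
      ext u
      exact reflMap_invol B (a : V) u
    · simp only [map_mul, map_inv, FreeGroup.lift_apply_of]
      rw [mul_inv_eq_one]
      ext u
      show reflMap B (a:V) (reflMap B (b:V) (reflMap B (a:V) u)) = reflMap B (c:V) u
      rw [hc]
      exact reflMap_braid B hsym _ _ u (hnon _ a.2) (hnon _ b.2))

@[simp] lemma piW_wgen {x : V} (hx : x ∈ R) :
    piW B R hsym hnon (wgen B R x hx) = reflPerm B x :=
  PresentedGroup.toGroup.of _

end PI

section CONJ
variable {V : Type*} [AddCommGroup V] [Module ℝ V] (B : V →ₗ[ℝ] V →ₗ[ℝ] ℝ) (R : Set V)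
variable (hsym : ∀ u v : V, B u v = B v u) (hnon : ∀ α ∈ R, B α α ≠ 0)
variable (hclos : ∀ α ∈ R, ∀ β ∈ R, reflMap B α β ∈ R)

private def Qprop (g : EAW B R) : Prop :=
  ∀ y (hy : y ∈ R), ∃ h1 : (piW B R hsym hnon g) y ∈ R,
    g * wgen B R y hy * g⁻¹ = wgen B R ((piW B R hsym hnon g) y) h1

include hclos in
lemma conj_wgen (g : EAW B R) : Qprop B R hsym hnon g := by
  classical
  suffices h : Qprop B R hsym hnon g ∧ Qprop B R hsym hnon g⁻¹ from h.1
  let H : Subgroup (EAW B R) :=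
    { carrier := {g | Qprop B R hsym hnon g ∧ Qprop B R hsym hnon g⁻¹}
      one_mem' := by
        constructor <;>
        · intro y hy
          refine ⟨by simpa using hy, ?_⟩
          apply wgen_eq
          simp
      mul_mem' := by
        rintro a b ⟨Qa, Qa'⟩ ⟨Qb, Qb'⟩
        constructor
        · intro y hy
          obtain ⟨hb1, eb⟩ := Qb y hy
          obtain ⟨ha1, ea⟩ := Qa _ hb1
          refine ⟨by simpa using ha1, ?_⟩
          have : a * b * wgen B R y hy * (a * b)⁻¹
              = a * (b * wgen B R y hy * b⁻¹) * a⁻¹ := by group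
          rw [this, eb, ea]
          apply wgen_eq
          simp
        · intro y hy
          obtain ⟨ha1, ea⟩ := Qa' y hy
          obtain ⟨hb1, eb⟩ := Qb' _ ha1
          refine ⟨by simpa using hb1, ?_⟩
          have : (a * b)⁻¹ * wgen B R y hy * (a * b)⁻¹⁻¹
              = b⁻¹ * (a⁻¹ * wgen B R y hy * a⁻¹⁻¹) * b⁻¹⁻¹ := by group
          rw [this, ea, eb]
          apply wgen_eq
          simp
      inv_mem' := by
        rintro a ⟨Qa, Qa'⟩
        refine ⟨Qa', ?_⟩
        rw [inv_inv]
        exact Qa }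
  have base : ∀ x : V, ∀ hx : x ∈ R,
      Qprop B R hsym hnon (wgen B R x hx) := by
    intro x hx y hy
    refine ⟨by simpa using hclos _ hx _ hy, ?_⟩
    rw [wgen_inv, wgen_braid B R hclos hx hy]
    apply wgen_eq
    simp
  have : g ∈ H := by
    apply PresentedGroup.generated_by
    intro j
    show Qprop B R hsym hnon _ ∧ Qprop B R hsym hnon _
    constructor
    · exact base j j.2
    · rw [show (PresentedGroup.of j : EAW B R) = wgen B R j j.2 from rfl, wgen_inv]
      exact base j j.2
  exact this

include hclos in
lemma central_of_pi_one {k : EAW B R} (hk : piW B R hsym hnon k = 1)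
    {x : V} (hx : x ∈ R) : k * wgen B R x hx = wgen B R x hx * k := by
  obtain ⟨h1, e⟩ := conj_wgen B R hsym hnon hclos k x hx
  have e2 : k * wgen B R x hx * k⁻¹ = wgen B R x hx := by
    rw [e]; apply wgen_eq; rw [hk]; rfl
  calc k * wgen B R x hx = (k * wgen B R x hx * k⁻¹) * k := by group
  _ = wgen B R x hx * k := by rw [e2]

end CONJ

section TGEN
variable {V : Type*} [AddCommGroup V] [Module ℝ V] (B : V →ₗ[ℝ] V →ₗ[ℝ] ℝ) (R : Set V)
variable (hsym : ∀ u v : V, B u v = B v u) (hnon : ∀ α ∈ R, B α α ≠ 0)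
variable (hclos : ∀ α ∈ R, ∀ β ∈ R, reflMap B α β ∈ R)

lemma tgen_eq {x y σ : V} (hx : x ∈ R) (hxσ : x + σ ∈ R) (hy : y ∈ R) (hyσ : y + σ ∈ R)
    (e : x = y) : tgen B R x σ hx hxσ = tgen B R y σ hy hyσ := by subst e; rfl

lemma piW_tgen_apply {y σ : V} (hy : y ∈ R) (hyσ : y + σ ∈ R)
    (hσ : ∀ u : V, B σ u = 0) (u : V) :
    piW B R hsym hnon (tgen B R y σ hy hyσ) u = u + ((2 * B u y) / B y y) • σ := by
  simp only [tgen, map_mul, piW_wgen, Equiv.Perm.mul_apply, reflPerm_apply]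
  exact transv_eq B hsym y σ u (hnon _ hy) hσ

include hsym hclos in
lemma tgen_conj {γ y σ : V} (hγ : γ ∈ R) (hy : y ∈ R) (hyσ : y + σ ∈ R)
    (hσ : ∀ u : V, B σ u = 0) :
    ∃ (h1 : reflMap B γ y ∈ R) (h2 : reflMap B γ y + σ ∈ R),
      wgen B R γ hγ * tgen B R y σ hy hyσ * wgen B R γ hγ
        = tgen B R (reflMap B γ y) σ h1 h2 := by
  have h1 : reflMap B γ y ∈ R := hclos _ hγ _ hy
  have e : reflMap B γ (y + σ) = reflMap B γ y + σ := reflMap_shift B hsym γ y σ hσ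
  have h2 : reflMap B γ y + σ ∈ R := e ▸ hclos _ hγ _ hyσ
  refine ⟨h1, h2, ?_⟩
  have hinv := wgen_mul_self B R hγ
  have : wgen B R γ hγ * tgen B R y σ hy hyσ * wgen B R γ hγ
      = (wgen B R γ hγ * wgen B R (y + σ) hyσ * wgen B R γ hγ)
        * (wgen B R γ hγ * wgen B R y hy * wgen B R γ hγ) := by
    simp only [tgen]
    calc wgen B R γ hγ * (wgen B R (y + σ) hyσ * wgen B R y hy) * wgen B R γ hγ
        = wgen B R γ hγ * wgen B R (y + σ) hyσ * 1 * wgen B R y hy * wgen B R γ hγ := by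
          group
      _ = _ := by rw [← hinv]; group
  rw [this, wgen_braid B R hclos hγ hyσ, wgen_braid B R hclos hγ hy]
  unfold tgen
  rw [wgen_eq B R _ h2 e]

end TGEN

section HELP
variable {G : Type*} [Group G]

lemma conj_mul_helper {c a b : G} (hc : c * c = 1) :
    c * (a * b) * c = (c * a * c) * (c * b * c) := by
  calc c * (a * b) * c = c * a * 1 * b * c := by group
    _ = _ := by rw [← hc]; group

lemma conj_inv_helper {c a : G} (hc : c * c = 1) :
    c * a⁻¹ * c = (c * a * c)⁻¹ := by
  have hci : c⁻¹ = c := inv_eq_of_mul_eq_one_right hc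
  rw [mul_inv_rev, mul_inv_rev, hci]
  group

end HELP

section PARTS
variable {V : Type*} [AddCommGroup V] [Module ℝ V] (B : V →ₗ[ℝ] V →ₗ[ℝ] ℝ) (R : Set V)
variable (hsym : ∀ u v : V, B u v = B v u) (hnon : ∀ α ∈ R, B α α ≠ 0)
variable (hclos : ∀ α ∈ R, ∀ β ∈ R, reflMap B α β ∈ R)

/-- The commutator expression of part (i). -/
noncomputable def commExpr (β σ δ : V) (hβ : β ∈ R) (hβσ : β + σ ∈ R) (hβδ : β + δ ∈ R) :
    EAW B R :=
  (tgen B R β σ hβ hβσ)⁻¹ * (tgen B R β δ hβ hβδ)⁻¹ *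
    tgen B R β σ hβ hβσ * tgen B R β δ hβ hβδ

include hsym hnon in
lemma pi_tgen_comm {β σ δ : V} (hβ : β ∈ R) (hβσ : β + σ ∈ R) (hβδ : β + δ ∈ R)
    (hσ : ∀ u : V, B σ u = 0) (hδ : ∀ u : V, B δ u = 0) :
    piW B R hsym hnon (commExpr B R β σ δ hβ hβσ hβδ) = 1 := by
  set π := piW B R hsym hnon
  have hcomm : π (tgen B R β σ hβ hβσ) * π (tgen B R β δ hβ hβδ)
      = π (tgen B R β δ hβ hβδ) * π (tgen B R β σ hβ hβσ) := by
    ext u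
    simp only [π]
    simp only [Equiv.Perm.mul_apply, piW_tgen_apply B R hsym hnon hβ hβσ hσ,
      piW_tgen_apply B R hsym hnon hβ hβδ hδ, map_add, map_smul, LinearMap.add_apply,
      LinearMap.smul_apply, smul_eq_mul, hsym β σ, hsym β δ, hσ, hδ]
    module
  have expand : π (commExpr B R β σ δ hβ hβσ hβδ)
      = (π (tgen B R β σ hβ hβσ))⁻¹ * (π (tgen B R β δ hβ hβδ))⁻¹ *
        π (tgen B R β σ hβ hβσ) * π (tgen B R β δ hβ hβδ) := by
    simp [commExpr, map_mul, map_inv]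
  rw [expand, mul_assoc _ _ (π (tgen B R β δ hβ hβδ)), hcomm]
  group

include hsym hnon hclos in
lemma comm_step {γ β σ δ : V} (hγ : γ ∈ R) (hβ : β ∈ R)
    (hσ : ∀ u : V, B σ u = 0) (hδ : ∀ u : V, B δ u = 0)
    (hβσ : β + σ ∈ R) (hβδ : β + δ ∈ R) :
    ∃ (h1 : reflMap B γ β ∈ R) (h2 : reflMap B γ β + σ ∈ R) (h3 : reflMap B γ β + δ ∈ R),
      commExpr B R β σ δ hβ hβσ hβδ
        = commExpr B R (reflMap B γ β) σ δ h1 h2 h3 := by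
  obtain ⟨h1, h2, eσ⟩ := tgen_conj B R hsym hclos hγ hβ hβσ hσ
  obtain ⟨h1', h3, eδ⟩ := tgen_conj B R hsym hclos hγ hβ hβδ hδ
  refine ⟨h1, h2, h3, ?_⟩
  have hc := wgen_mul_self B R hγ
  set c := wgen B R γ hγ
  have conj : c * commExpr B R β σ δ hβ hβσ hβδ * c
      = commExpr B R (reflMap B γ β) σ δ h1 h2 h3 := by
    unfold commExpr
    rw [show (tgen B R β σ hβ hβσ)⁻¹ * (tgen B R β δ hβ hβδ)⁻¹ *
        tgen B R β σ hβ hβσ * tgen B R β δ hβ hβδ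
      = ((tgen B R β σ hβ hβσ)⁻¹ * (tgen B R β δ hβ hβδ)⁻¹) *
        (tgen B R β σ hβ hβσ * tgen B R β δ hβ hβδ) by group]
    rw [conj_mul_helper hc, conj_mul_helper hc, conj_mul_helper hc,
      conj_inv_helper hc, conj_inv_helper hc, eσ, eδ]
    group
  have cent := central_of_pi_one B R hsym hnon hclos
    (pi_tgen_comm B R hsym hnon hβ hβσ hβδ hσ hδ) hγ
  rw [show (wgen B R γ hγ) = c from rfl] at cent
  rw [← conj, ← cent, mul_assoc, hc, mul_one]

end PARTS

section ORBIT
variable {V : Type*} [AddCommGroup V] [Module ℝ V] (B : V →ₗ[ℝ] V →ₗ[ℝ] ℝ) (R : Set V)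
variable (hsym : ∀ u v : V, B u v = B v u) (hnon : ∀ α ∈ R, B α α ≠ 0)
variable (hclos : ∀ α ∈ R, ∀ β ∈ R, reflMap B α β ∈ R)

include hclos in
lemma foldr_mem {α : V} (hα : α ∈ R) (l : List ↑R) :
    l.foldr (fun γ u => reflMap B (γ : V) u) α ∈ R := by
  induction l with
  | nil => exact hα
  | cons γ l ih => exact hclos _ γ.2 _ ih

include hsym hnon hclos in
lemma comm_orbit {α σ δ : V} (hα : α ∈ R)
    (hσ : ∀ u : V, B σ u = 0) (hδ : ∀ u : V, B δ u = 0)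
    (hασ : α + σ ∈ R) (hαδ : α + δ ∈ R) (l : List ↑R) :
    ∃ (hβ : l.foldr (fun γ u => reflMap B (γ : V) u) α ∈ R)
      (hβσ : l.foldr (fun γ u => reflMap B (γ : V) u) α + σ ∈ R)
      (hβδ : l.foldr (fun γ u => reflMap B (γ : V) u) α + δ ∈ R),
      commExpr B R α σ δ hα hασ hαδ
        = commExpr B R (l.foldr (fun γ u => reflMap B (γ : V) u) α) σ δ hβ hβσ hβδ := by
  induction l with
  | nil => exact ⟨hα, hασ, hαδ, rfl⟩
  | cons γ l ih =>
    obtain ⟨hβ, hβσ, hβδ, e⟩ := ih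
    obtain ⟨h1, h2, h3, e'⟩ := comm_step B R hsym hnon hclos γ.2 hβ hσ hδ hβσ hβδ
    exact ⟨h1, h2, h3, e.trans e'⟩

end ORBIT

section PART2
variable {V : Type*} [AddCommGroup V] [Module ℝ V] (B : V →ₗ[ℝ] V →ₗ[ℝ] ℝ) (R : Set V)
variable (hsym : ∀ u v : V, B u v = B v u) (hnon : ∀ α ∈ R, B α α ≠ 0)
variable (hclos : ∀ α ∈ R, ∀ β ∈ R, reflMap B α β ∈ R)

lemma neg_radical {δ : V} (hδ : ∀ u : V, B δ u = 0) : ∀ u : V, B (-δ) u = 0 := by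
  intro u; rw [map_neg]; simp [hδ u]

/-- The expression of part (ii). -/
noncomputable def expr2 (β σ δ : V) (hβ : β ∈ R) (hβσ : β + σ ∈ R)
    (hβσδ : β + σ + δ ∈ R) (hβnd : β + -δ ∈ R) : EAW B R :=
  tgen B R (β + σ) δ hβσ hβσδ * tgen B R β (-δ) hβ hβnd

include hsym hnon in
lemma pi_expr2_one {β σ δ : V} (hβ : β ∈ R) (hβσ : β + σ ∈ R)
    (hβσδ : β + σ + δ ∈ R) (hβnd : β + -δ ∈ R)
    (hσ : ∀ u : V, B σ u = 0) (hδ : ∀ u : V, B δ u = 0) :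
    piW B R hsym hnon (expr2 B R β σ δ hβ hβσ hβσδ hβnd) = 1 := by
  have hndr := neg_radical B hδ
  have hσ' : ∀ v : V, B v σ = 0 := fun v => by rw [hsym]; exact hσ v
  have hδ' : ∀ v : V, B v δ = 0 := fun v => by rw [hsym]; exact hδ v
  ext u
  simp only [expr2, map_mul, Equiv.Perm.mul_apply,
    piW_tgen_apply B R hsym hnon hβ hβnd hndr,
    piW_tgen_apply B R hsym hnon hβσ hβσδ hδ,
    B_shift B hsym β σ hσ, map_add, map_neg, map_smul, LinearMap.add_apply,
    LinearMap.neg_apply, LinearMap.smul_apply, smul_eq_mul,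
    hσ', hδ', hσ, hδ, Equiv.Perm.one_apply]
  module

include hsym hnon hclos in
lemma expr2_step {γ β σ δ : V} (hγ : γ ∈ R) (hβ : β ∈ R)
    (hσ : ∀ u : V, B σ u = 0) (hδ : ∀ u : V, B δ u = 0)
    (hβσ : β + σ ∈ R) (hβσδ : β + σ + δ ∈ R) (hβnd : β + -δ ∈ R) :
    ∃ (h1 : reflMap B γ β ∈ R) (h2 : reflMap B γ β + σ ∈ R)
      (h3 : reflMap B γ β + σ + δ ∈ R) (h4 : reflMap B γ β + -δ ∈ R),
      expr2 B R β σ δ hβ hβσ hβσδ hβnd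
        = expr2 B R (reflMap B γ β) σ δ h1 h2 h3 h4 := by
  have hndr := neg_radical B hδ
  obtain ⟨ha1, ha2, e1⟩ := tgen_conj B R hsym hclos hγ hβσ hβσδ hδ
  obtain ⟨h1, h4, e2⟩ := tgen_conj B R hsym hclos hγ hβ hβnd hndr
  have eshift : reflMap B γ (β + σ) = reflMap B γ β + σ := reflMap_shift B hsym γ β σ hσ
  have h2 : reflMap B γ β + σ ∈ R := eshift ▸ ha1
  have h3 : reflMap B γ β + σ + δ ∈ R := eshift ▸ ha2
  refine ⟨h1, h2, h3, h4, ?_⟩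
  have hc := wgen_mul_self B R hγ
  set c := wgen B R γ hγ with hcdef
  have conj : c * expr2 B R β σ δ hβ hβσ hβσδ hβnd * c
      = expr2 B R (reflMap B γ β) σ δ h1 h2 h3 h4 := by
    unfold expr2
    rw [conj_mul_helper hc, e1, e2, tgen_eq B R ha1 ha2 h2 h3 eshift]
  have cent := central_of_pi_one B R hsym hnon hclos
    (pi_expr2_one B R hsym hnon hβ hβσ hβσδ hβnd hσ hδ) hγ
  rw [show (wgen B R γ hγ) = c from rfl] at cent
  rw [← conj, ← cent, mul_assoc, hc, mul_one]

include hsym hnon hclos in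
lemma expr2_orbit {α σ δ : V} (hα : α ∈ R)
    (hσ : ∀ u : V, B σ u = 0) (hδ : ∀ u : V, B δ u = 0)
    (hασ : α + σ ∈ R) (hασδ : α + σ + δ ∈ R) (hαnd : α + -δ ∈ R) (l : List ↑R) :
    ∃ (hβ : l.foldr (fun γ u => reflMap B (γ : V) u) α ∈ R)
      (hβσ : l.foldr (fun γ u => reflMap B (γ : V) u) α + σ ∈ R)
      (hβσδ : l.foldr (fun γ u => reflMap B (γ : V) u) α + σ + δ ∈ R)
      (hβnd : l.foldr (fun γ u => reflMap B (γ : V) u) α + -δ ∈ R),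
      expr2 B R α σ δ hα hασ hασδ hαnd
        = expr2 B R (l.foldr (fun γ u => reflMap B (γ : V) u) α) σ δ hβ hβσ hβσδ hβnd := by
  induction l with
  | nil => exact ⟨hα, hασ, hασδ, hαnd, rfl⟩
  | cons γ l ih =>
    obtain ⟨hβ, hβσ, hβσδ, hβnd, e⟩ := ih
    obtain ⟨h1, h2, h3, h4, e'⟩ := expr2_step B R hsym hnon hclos γ.2 hβ hσ hδ hβσ hβσδ hβnd
    exact ⟨h1, h2, h3, h4, e.trans e'⟩

end PART2

section PART3
variable {V : Type*} [AddCommGroup V] [Module ℝ V] (B : V →ₗ[ℝ] V →ₗ[ℝ] ℝ) (R : Set V)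
variable (hsym : ∀ u v : V, B u v = B v u) (hnon : ∀ α ∈ R, B α α ≠ 0)
variable (hclos : ∀ α ∈ R, ∀ β ∈ R, reflMap B α β ∈ R)

lemma sum_radical {n : ℕ} {δs : Fin n → V} (hrad : ∀ r, ∀ u : V, B (δs r) u = 0) :
    ∀ u : V, B (∑ r, δs r) u = 0 := by
  intro u
  rw [map_sum, LinearMap.sum_apply]
  exact Finset.sum_eq_zero fun r _ => hrad r u

/-- The expression of part (iii). -/
noncomputable def expr3 (β : V) (n : ℕ) (δs : Fin n → V) (hβ : β ∈ R)
    (hm : ∀ r, β + δs r ∈ R) (hn : β + -(∑ r, δs r) ∈ R) : EAW B R :=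
  tgen B R β (-(∑ r, δs r)) hβ hn *
    (List.ofFn fun r => tgen B R β (δs r) hβ (hm r)).prod

include hsym hnon in
lemma piW_prod_apply {β : V} (hβ : β ∈ R) (n : ℕ) (δs : Fin n → V)
    (hrad : ∀ r, ∀ u : V, B (δs r) u = 0) (hm : ∀ r, β + δs r ∈ R) (u : V) :
    piW B R hsym hnon ((List.ofFn fun r => tgen B R β (δs r) hβ (hm r)).prod) u
      = u + ((2 * B u β) / B β β) • (∑ r, δs r) := by
  induction n generalizing u with
  | zero => simp
  | succ n ih =>
    rw [List.ofFn_succ, List.prod_cons, map_mul, Equiv.Perm.mul_apply,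
      ih (fun r => δs r.succ) (fun r => hrad r.succ) (fun r => hm r.succ) u,
      piW_tgen_apply B R hsym hnon hβ (hm 0) (hrad 0)]
    have hSS : B (∑ r : Fin n, δs r.succ) β = 0 :=
      sum_radical B (fun r => hrad r.succ) β
    rw [map_add, map_smul, LinearMap.add_apply, LinearMap.smul_apply, hSS,
      Fin.sum_univ_succ]
    simp only [smul_eq_mul, mul_zero, add_zero]
    module

include hsym hnon in
lemma pi_expr3_one {β : V} (hβ : β ∈ R) (n : ℕ) (δs : Fin n → V)
    (hrad : ∀ r, ∀ u : V, B (δs r) u = 0) (hm : ∀ r, β + δs r ∈ R)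
    (hn : β + -(∑ r, δs r) ∈ R) :
    piW B R hsym hnon (expr3 B R β n δs hβ hm hn) = 1 := by
  have hSSr : ∀ u : V, B (∑ r, δs r) u = 0 := sum_radical B hrad
  ext u
  rw [expr3, map_mul, Equiv.Perm.mul_apply, piW_prod_apply B R hsym hnon hβ n δs hrad hm u,
    piW_tgen_apply B R hsym hnon hβ hn (neg_radical B hSSr),
    map_add, map_smul, LinearMap.add_apply, LinearMap.smul_apply, hSSr β]
  simp only [smul_eq_mul, mul_zero, add_zero, Equiv.Perm.one_apply]
  module

include hsym hnon hclos in
lemma prod_conj {γ β : V} (hγ : γ ∈ R) (hβ : β ∈ R) (n : ℕ) (δs : Fin n → V)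
    (hrad : ∀ r, ∀ u : V, B (δs r) u = 0) (hm : ∀ r, β + δs r ∈ R)
    (h1 : reflMap B γ β ∈ R) (hm' : ∀ r, reflMap B γ β + δs r ∈ R) :
    wgen B R γ hγ * (List.ofFn fun r => tgen B R β (δs r) hβ (hm r)).prod * wgen B R γ hγ
      = (List.ofFn fun r => tgen B R (reflMap B γ β) (δs r) h1 (hm' r)).prod := by
  have hc := wgen_mul_self B R hγ
  induction n with
  | zero => simpa using hc
  | succ n ih =>
    rw [List.ofFn_succ, List.prod_cons, List.ofFn_succ, List.prod_cons,
      conj_mul_helper hc]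
    obtain ⟨h1', h2', e⟩ := tgen_conj B R hsym hclos hγ hβ (hm 0) (hrad 0)
    rw [e, ih (fun r => δs r.succ) (fun r => hrad r.succ) (fun r => hm r.succ)
      (fun r => hm' r.succ), tgen_eq B R h1' h2' h1 (hm' 0) rfl]

include hsym hnon hclos in
lemma expr3_step {γ β : V} (hγ : γ ∈ R) (hβ : β ∈ R) (n : ℕ) (δs : Fin n → V)
    (hrad : ∀ r, ∀ u : V, B (δs r) u = 0) (hm : ∀ r, β + δs r ∈ R)
    (hn : β + -(∑ r, δs r) ∈ R) :
    ∃ (h1 : reflMap B γ β ∈ R) (hm' : ∀ r, reflMap B γ β + δs r ∈ R)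
      (hn' : reflMap B γ β + -(∑ r, δs r) ∈ R),
      expr3 B R β n δs hβ hm hn = expr3 B R (reflMap B γ β) n δs h1 hm' hn' := by
  have hSSr : ∀ u : V, B (∑ r, δs r) u = 0 := sum_radical B hrad
  obtain ⟨h1, hn', e1⟩ := tgen_conj B R hsym hclos hγ hβ hn (neg_radical B hSSr)
  have hm' : ∀ r, reflMap B γ β + δs r ∈ R := fun r =>
    (reflMap_shift B hsym γ β (δs r) (hrad r)) ▸ hclos _ hγ _ (hm r)
  refine ⟨h1, hm', hn', ?_⟩
  have hc := wgen_mul_self B R hγ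
  set c := wgen B R γ hγ with hcdef
  have conj : c * expr3 B R β n δs hβ hm hn * c
      = expr3 B R (reflMap B γ β) n δs h1 hm' hn' := by
    unfold expr3
    rw [conj_mul_helper hc, e1,
      prod_conj B R hsym hnon hclos hγ hβ n δs hrad hm h1 hm']
  have cent := central_of_pi_one B R hsym hnon hclos
    (pi_expr3_one B R hsym hnon hβ n δs hrad hm hn) hγ
  rw [show (wgen B R γ hγ) = c from rfl] at cent
  rw [← conj, ← cent, mul_assoc, hc, mul_one]

include hsym hnon hclos in
lemma expr3_orbit {α : V} (hα : α ∈ R) (n : ℕ) (δs : Fin n → V)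
    (hrad : ∀ r, ∀ u : V, B (δs r) u = 0) (hm : ∀ r, α + δs r ∈ R)
    (hn : α + -(∑ r, δs r) ∈ R) (l : List ↑R) :
    ∃ (hβ : l.foldr (fun γ u => reflMap B (γ : V) u) α ∈ R)
      (hmβ : ∀ r, l.foldr (fun γ u => reflMap B (γ : V) u) α + δs r ∈ R)
      (hnβ : l.foldr (fun γ u => reflMap B (γ : V) u) α + -(∑ r, δs r) ∈ R),
      expr3 B R α n δs hα hm hn
        = expr3 B R (l.foldr (fun γ u => reflMap B (γ : V) u) α) n δs hβ hmβ hnβ := by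
  induction l with
  | nil => exact ⟨hα, hm, hn, rfl⟩
  | cons γ l ih =>
    obtain ⟨hβ, hmβ, hnβ, e⟩ := ih
    obtain ⟨h1, hm', hn', e'⟩ := expr3_step B R hsym hnon hclos γ.2 hβ n δs hrad hmβ hnβ
    exact ⟨h1, hm', hn', e.trans e'⟩

end PART3

/-- `β` lies in the orbit of `α` under the Weyl group `W`, the group generated by the
reflections `s_γ`, `γ ∈ R` (expressed via a finite sequence of reflections applied to `α`;
this is equivalent since each reflection is an involution). -/
def WOrbit {V : Type*} [AddCommGroup V] [Module ℝ V] (B : V →ₗ[ℝ] V →ₗ[ℝ] ℝ)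
    (R : Set V) (α β : V) : Prop :=
  ∃ l : List R, β = l.foldr (fun γ u => reflMap B (γ : V) u) α

/-- If `α, β ∈ R` lie in the same `W`-orbit, then:
(i) `[t̂_α^σ, t̂_α^δ] = [t̂_β^σ, t̂_β^δ]` (with `[x,y] = x⁻¹y⁻¹xy`);
(ii) `t̂_{α+σ}^δ t̂_α^{−δ} = t̂_{β+σ}^δ t̂_β^{−δ}`;
(iii) `t̂_α^{−(δ₁+⋯+δ_n)} ∏ t̂_α^{δ_r} = t̂_β^{−(δ₁+⋯+δ_n)} ∏ t̂_β^{δ_r}`. -/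
theorem orbit_invariance {V : Type*} [AddCommGroup V] [Module ℝ V]
    (B : V →ₗ[ℝ] V →ₗ[ℝ] ℝ) (R : Set V)
    (hsym : ∀ u v : V, B u v = B v u)
    (hpsd : ∀ v : V, 0 ≤ B v v)
    (hnon : ∀ α ∈ R, B α α ≠ 0)
    (hclos : ∀ α ∈ R, ∀ β ∈ R, reflMap B α β ∈ R)
    (α β : V) (hα : α ∈ R) (hβ : β ∈ R) (horb : WOrbit B R α β) :
    -- (i)
    (∀ (σ δ : V), (∀ u : V, B σ u = 0) → (∀ u : V, B δ u = 0) →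
        ∀ (hασ : α + σ ∈ R) (hαδ : α + δ ∈ R),
          ∃ (hβσ : β + σ ∈ R) (hβδ : β + δ ∈ R),
            (tgen B R α σ hα hασ)⁻¹ * (tgen B R α δ hα hαδ)⁻¹ *
                tgen B R α σ hα hασ * tgen B R α δ hα hαδ =
              (tgen B R β σ hβ hβσ)⁻¹ * (tgen B R β δ hβ hβδ)⁻¹ *
                tgen B R β σ hβ hβσ * tgen B R β δ hβ hβδ) ∧
    -- (ii)
    (∀ (σ δ : V), (∀ u : V, B σ u = 0) → (∀ u : V, B δ u = 0) →
        ∀ (hασ : α + σ ∈ R) (hαδ : α + δ ∈ R) (hασδ : α + σ + δ ∈ R),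
          ∃ (hαnd : α + -δ ∈ R) (hβσ : β + σ ∈ R) (hβσδ : β + σ + δ ∈ R)
            (hβnd : β + -δ ∈ R),
            tgen B R (α + σ) δ hασ hασδ * tgen B R α (-δ) hα hαnd =
              tgen B R (β + σ) δ hβσ hβσδ * tgen B R β (-δ) hβ hβnd) ∧
    -- (iii)
    (∀ (n : ℕ) (δs : Fin n → V), (∀ r : Fin n, ∀ u : V, B (δs r) u = 0) →
        ∀ (hmα : ∀ r : Fin n, α + δs r ∈ R), (α + ∑ r : Fin n, δs r ∈ R) →
          ∃ (hnα : α + -(∑ r : Fin n, δs r) ∈ R) (hmβ : ∀ r : Fin n, β + δs r ∈ R)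
            (hnβ : β + -(∑ r : Fin n, δs r) ∈ R),
            tgen B R α (-(∑ r : Fin n, δs r)) hα hnα *
                (List.ofFn fun r : Fin n => tgen B R α (δs r) hα (hmα r)).prod =
              tgen B R β (-(∑ r : Fin n, δs r)) hβ hnβ *
                (List.ofFn fun r : Fin n => tgen B R β (δs r) hβ (hmβ r)).prod) := by
  obtain ⟨l, hl⟩ := horb
  subst hl
  refine ⟨?_, ?_, ?_⟩
  · intro σ δ hσ hδ hασ hαδ
    obtain ⟨hβ', hβσ, hβδ, e⟩ := comm_orbit B R hsym hnon hclos hα hσ hδ hασ hαδ l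
    exact ⟨hβσ, hβδ, e⟩
  · intro σ δ hσ hδ hασ hαδ hασδ
    have hαnd : α + -δ ∈ R := mem_neg_of_mem B R hsym hnon hclos hα hαδ hδ
    obtain ⟨hβ', hβσ, hβσδ, hβnd, e⟩ :=
      expr2_orbit B R hsym hnon hclos hα hσ hδ hασ hασδ hαnd l
    exact ⟨hαnd, hβσ, hβσδ, hβnd, e⟩
  · intro n δs hrad hmα hsum
    have hnα : α + -(∑ r, δs r) ∈ R :=
      mem_neg_of_mem B R hsym hnon hclos hα hsum (sum_radical B hrad)
    obtain ⟨hβ', hmβ, hnβ, e⟩ :=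
      expr3_orbit B R hsym hnon hclos hα n δs hrad hmα hnα l
    exact ⟨hnα, hmβ, hnβ, e⟩
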